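/- Assume (H0) and d₁, d₂, l > 0. Then for every natural number k, the characteristic-equation coefficients satisfy A_k > 0, B_k > 0 and C_k > 0. -/
import Mathlib


open Real

/-- Δ = M² − 4·K·(a·m + c·p)·(a·r₂ + c·d − c·r₀) with M = a·m + c·p + K·(a·r₂ + c·d). -/
noncomputable def Delta (r₀ r₂ K d a p c m : ℝ) : ℝ :=
  (a*m + c*p + K*(a*r₂ + c*d))^2 - 4*K*(a*m + c*p)*(a*r₂ + c*d - c*r₀)

/-- The positive equilibrium predator density v⋆. -/
noncomputable def vstar (r₀ r₂ K d a p c m : ℝ) : ℝ :=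
  (-(a*m + c*p + K*(a*r₂ + c*d)) + Real.sqrt (Delta r₀ r₂ K d a p c m)) / (2*K*(a*m + c*p))

/-- The positive equilibrium prey density u⋆ = (r₂ + m·v⋆)/c. -/
noncomputable def ustar (r₀ r₂ K d a p c m : ℝ) : ℝ := (r₂ + m * vstar r₀ r₂ K d a p c m) / c

/-- Linearization coefficient a₁₂. -/
noncomputable def a12 (r₀ r₂ K d a p c m : ℝ) : ℝ :=
  -K*r₀*ustar r₀ r₂ K d a p c m / (1 + K*vstar r₀ r₂ K d a p c m)^2 - p*ustar r₀ r₂ K d a p c m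

/-- Linearization coefficient a₂₁. -/
noncomputable def a21 (r₀ r₂ K d a p c m : ℝ) : ℝ := c * vstar r₀ r₂ K d a p c m

/-- Linearization coefficient a₂₂. -/
noncomputable def a22 (r₀ r₂ K d a p c m : ℝ) : ℝ := -m * vstar r₀ r₂ K d a p c m

/-- Linearization coefficient b₁₁. -/
noncomputable def b11 (r₀ r₂ K d a p c m : ℝ) : ℝ := -a * ustar r₀ r₂ K d a p c m

/-- A_k = (d₁ + d₂)·k²/l² − a₂₂. -/
noncomputable def Ak (r₀ r₂ K d a p c m d₁ d₂ l : ℝ) (k : ℕ) : ℝ :=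
  (d₁ + d₂)*(k:ℝ)^2/l^2 - a22 r₀ r₂ K d a p c m

/-- B_k = d₁·d₂·k⁴/l⁴ − a₂₂·d₁·k²/l² − a₁₂·a₂₁. -/
noncomputable def Bk (r₀ r₂ K d a p c m d₁ d₂ l : ℝ) (k : ℕ) : ℝ :=
  d₁*d₂*(k:ℝ)^4/l^4 - a22 r₀ r₂ K d a p c m * d₁*(k:ℝ)^2/l^2 - a12 r₀ r₂ K d a p c m * a21 r₀ r₂ K d a p c m

/-- C_k = −b₁₁·d₂·k²/l² + a₂₂·b₁₁. -/
noncomputable def Ck (r₀ r₂ K d a p c m d₁ d₂ l : ℝ) (k : ℕ) : ℝ :=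
  -(b11 r₀ r₂ K d a p c m)*d₂*(k:ℝ)^2/l^2 + a22 r₀ r₂ K d a p c m * b11 r₀ r₂ K d a p c m

theorem stmt3 (r₀ r₂ K d a p c m d₁ d₂ l : ℝ) (hr₀ : 0 < r₀) (hr₂ : 0 < r₂) (hK : 0 < K) (hd : 0 < d) (ha : 0 < a) (hp : 0 < p) (hc : 0 < c) (hm : 0 < m)
    (hd₁ : 0 < d₁) (hd₂ : 0 < d₂) (hl : 0 < l)
    (hH0 : a*r₂ + c*d - c*r₀ < 0) :
    ∀ k : ℕ, 0 < Ak r₀ r₂ K d a p c m d₁ d₂ l k ∧ 0 < Bk r₀ r₂ K d a p c m d₁ d₂ l k ∧ 0 < Ck r₀ r₂ K d a p c m d₁ d₂ l k := by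
  have hMpos : 0 < a*m + c*p + K*(a*r₂ + c*d) := by positivity
  have hden : 0 < 2*K*(a*m + c*p) := by positivity
  have hDelta : (a*m + c*p + K*(a*r₂ + c*d))^2 < Delta r₀ r₂ K d a p c m := by
    unfold Delta
    nlinarith [mul_pos hK (show (0:ℝ) < a*m + c*p by positivity)]
  have hsq : a*m + c*p + K*(a*r₂ + c*d) < Real.sqrt (Delta r₀ r₂ K d a p c m) :=
    (Real.lt_sqrt hMpos.le).mpr hDelta
  have hv : 0 < vstar r₀ r₂ K d a p c m := by
    unfold vstar
    apply div_pos (by linarith) hden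
  have hu : 0 < ustar r₀ r₂ K d a p c m := by
    unfold ustar
    apply div_pos _ hc
    nlinarith [mul_pos hm hv]
  have h1Kv : 0 < (1 + K * vstar r₀ r₂ K d a p c m)^2 :=
    pow_pos (by nlinarith [mul_pos hK hv]) 2
  have ha12 : a12 r₀ r₂ K d a p c m < 0 := by
    unfold a12
    have h1 : 0 < K*r₀*ustar r₀ r₂ K d a p c m / (1 + K*vstar r₀ r₂ K d a p c m)^2 :=
      div_pos (mul_pos (mul_pos hK hr₀) hu) h1Kv
    have h2 : -K*r₀*ustar r₀ r₂ K d a p c m / (1 + K*vstar r₀ r₂ K d a p c m)^2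
        = -(K*r₀*ustar r₀ r₂ K d a p c m / (1 + K*vstar r₀ r₂ K d a p c m)^2) := by ring
    rw [h2]
    nlinarith [mul_pos hp hu]
  have ha21 : 0 < a21 r₀ r₂ K d a p c m := mul_pos hc hv
  have ha22 : a22 r₀ r₂ K d a p c m < 0 := by
    unfold a22; nlinarith [mul_pos hm hv]
  have hb11 : b11 r₀ r₂ K d a p c m < 0 := by
    unfold b11; nlinarith [mul_pos ha hu]
  intro k
  have hk2 : 0 ≤ (k:ℝ)^2/l^2 := by positivity
  have hk4 : 0 ≤ (k:ℝ)^4/l^4 := by positivity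
  refine ⟨?_, ?_, ?_⟩
  · unfold Ak
    have h1 : 0 ≤ (d₁ + d₂)*((k:ℝ)^2/l^2) := mul_nonneg (by linarith) hk2
    have h2 : (d₁ + d₂)*(k:ℝ)^2/l^2 = (d₁ + d₂)*((k:ℝ)^2/l^2) := by ring
    linarith
  · unfold Bk
    have h1 : 0 ≤ d₁*d₂*((k:ℝ)^4/l^4) := mul_nonneg (by positivity) hk4
    have h2 : 0 ≤ (-a22 r₀ r₂ K d a p c m * d₁)*((k:ℝ)^2/l^2) :=
      mul_nonneg (mul_nonneg (by linarith) hd₁.le) hk2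
    have h3 : 0 < (-a12 r₀ r₂ K d a p c m) * a21 r₀ r₂ K d a p c m :=
      mul_pos (by linarith) ha21
    have h4 : d₁*d₂*(k:ℝ)^4/l^4 = d₁*d₂*((k:ℝ)^4/l^4) := by ring
    have h5 : a22 r₀ r₂ K d a p c m * d₁*(k:ℝ)^2/l^2 = -((-a22 r₀ r₂ K d a p c m * d₁)*((k:ℝ)^2/l^2)) := by ring
    linarith
  · unfold Ck
    have h1 : 0 ≤ (-(b11 r₀ r₂ K d a p c m)*d₂)*((k:ℝ)^2/l^2) :=
      mul_nonneg (mul_nonneg (by linarith) hd₂.le) hk2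
    have h2 : -(b11 r₀ r₂ K d a p c m)*d₂*(k:ℝ)^2/l^2 = (-(b11 r₀ r₂ K d a p c m)*d₂)*((k:ℝ)^2/l^2) := by ring
    have h3 : 0 < a22 r₀ r₂ K d a p c m * b11 r₀ r₂ K d a p c m :=
      mul_pos_of_neg_of_neg ha22 hb11
    linarith
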